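/- Let {αₖ}ₖ≥₁ ⊂ (0,1) be a stepsize sequence satisfying (1 - αₖ₊₁)αₖ ≤ αₖ₊₁ for all k ≥ 1. Let {Wₖ}ₖ≥₀ be independent random variables, each with log E[exp(s Wₖ)] ≤ s²b²/8 for all s ∈ ℝ (sub-Gaussian with parameter b/2). Define V₁ = α₁W₀ and Vₖ₊₁ = (1-αₖ₊₁)Vₖ + αₖ₊₁Wₖ (with the process indexed consistently). Then for all k, log E[exp(s Vₖ)] ≤ s²αₖb²/8 for all s ∈ ℝ. -/

import Mathlib

open MeasureTheory ProbabilityTheory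

/-- Auxiliary deterministic recursion: `Gaux α k f` computes the value of `V k`
when the noise values are given by `f`. -/
noncomputable def Gaux (α : ℕ → ℝ) : ℕ → (ℕ → ℝ) → ℝ
  | 0 => fun _ => 0
  | 1 => fun f => α 1 * f 0
  | (k + 2) => fun f => (1 - α (k + 2)) * Gaux α (k + 1) f + α (k + 2) * f (k + 1)

lemma measurable_Gaux (α : ℕ → ℝ) : ∀ k, Measurable (Gaux α k)
  | 0 => measurable_const
  | 1 => (measurable_pi_apply 0).const_mul _
  | (k + 2) => by
      exact ((measurable_Gaux α (k + 1)).const_mul _).add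
        ((measurable_pi_apply (k + 1)).const_mul _)

lemma Gaux_congr (α : ℕ → ℝ) : ∀ k, ∀ f f' : ℕ → ℝ,
    (∀ i, i < k → f i = f' i) → Gaux α k f = Gaux α k f'
  | 0 => fun _ _ _ => rfl
  | 1 => fun f f' h => by simp [Gaux, h 0 one_pos]
  | (k + 2) => fun f f' h => by
      have h1 := Gaux_congr α (k + 1) f f' (fun i hi => h i (Nat.lt_succ_of_lt hi))
      simp [Gaux, h1, h (k + 1) (Nat.lt_succ_self _)]

theorem subgaussian_recursion_mgf_bound {Ω : Type*} [MeasurableSpace Ω]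
    (μ : Measure Ω) [IsProbabilityMeasure μ]
    (b : ℝ) (hb : 0 < b)
    (W : ℕ → Ω → ℝ) (hWmeas : ∀ k, Measurable (W k))
    (hWindep : iIndepFun W μ)
    (hWmgf : ∀ k, ∀ s : ℝ,
      ∫ ω, Real.exp (s * W k ω) ∂μ ≤ Real.exp (s ^ 2 * b ^ 2 / 8))
    (α : ℕ → ℝ) (hα : ∀ k, 1 ≤ k → 0 < α k ∧ α k < 1)
    (hαcond : ∀ k, 1 ≤ k → (1 - α (k + 1)) * α k ≤ α (k + 1))
    (V : ℕ → Ω → ℝ)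
    (hV1 : V 1 = fun ω => α 1 * W 0 ω)
    (hVrec : ∀ k, 1 ≤ k →
      V (k + 1) = fun ω => (1 - α (k + 1)) * V k ω + α (k + 1) * W k ω) :
    ∀ k, 1 ≤ k → ∀ s : ℝ,
      ∫ ω, Real.exp (s * V k ω) ∂μ ≤ Real.exp (s ^ 2 * α k * b ^ 2 / 8) := by
  -- V k is the deterministic recursion applied to the noise
  have hVG : ∀ k, 1 ≤ k → V k = fun ω => Gaux α k (fun i => W i ω) := by
    intro k hk
    induction k with
    | zero => omega
    | succ n ih =>
      rcases Nat.eq_or_lt_of_le hk with h1 | h1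
      · cases h1
        funext ω
        simp [hV1, Gaux]
      · have hn : 1 ≤ n := by omega
        funext ω
        rw [hVrec n hn, ih hn]
        cases n with
        | zero => omega
        | succ m => simp [Gaux]
  have hVmeas : ∀ k, 1 ≤ k → Measurable (V k) := by
    intro k hk
    rw [hVG k hk]
    exact (measurable_Gaux α k).comp (measurable_pi_lambda _ fun i => hWmeas i)
  -- V k is independent of W k
  have hindep : ∀ k, 1 ≤ k → IndepFun (V k) (W k) μ := by
    intro k hk
    set S : Finset ℕ := Finset.range k with hS
    set T : Finset ℕ := {k} with hT
    have hd : Disjoint S T := by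
      simp [hS, hT, Finset.disjoint_singleton_right]
    have base := hWindep.indepFun_finset S T hd hWmeas
    set H : (S → ℝ) → ℝ := fun v =>
      Gaux α k (fun i => if h : i ∈ S then v ⟨i, h⟩ else 0) with hH
    have hHmeas : Measurable H := by
      apply (measurable_Gaux α k).comp
      apply measurable_pi_lambda
      intro i
      by_cases h : i ∈ S
      · simpa [h] using measurable_pi_apply (⟨i, h⟩ : S)
      · simpa [h] using measurable_const
    have hKmeas : Measurable (fun v : T → ℝ => v ⟨k, Finset.mem_singleton_self k⟩) :=
      measurable_pi_apply _
    have hcomp := base.comp hHmeas hKmeas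
    have e1 : H ∘ (fun a (i : S) => W i a) = V k := by
      funext ω
      rw [hVG k hk]
      apply Gaux_congr
      intro i hi
      simp [hH, Finset.mem_range.mpr hi, hS]
    have e2 : (fun v : T → ℝ => v ⟨k, Finset.mem_singleton_self k⟩) ∘
        (fun a (i : T) => W i a) = W k := rfl
    rwa [e1, e2] at hcomp
  -- main induction
  intro k hk
  induction k with
  | zero => omega
  | succ n ih =>
    rcases Nat.eq_or_lt_of_le hk with h1 | h1
    · -- base case k = 1
      cases h1
      intro s
      have h0 := hWmgf 0 (s * α 1)
      have heq : ∀ ω, s * V 1 ω = (s * α 1) * W 0 ω := by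
        intro ω; rw [hV1]; ring
      simp_rw [heq]
      refine h0.trans (Real.exp_le_exp.mpr ?_)
      have hα1 := hα 1 le_rfl
      nlinarith [sq_nonneg (s * b), mul_nonneg (mul_nonneg (sq_nonneg s) (sq_nonneg b))
        (mul_nonneg hα1.1.le (sub_nonneg.mpr hα1.2.le))]
    · have hn : 1 ≤ n := by omega
      intro s
      set A := α (n + 1) with hA
      have hAn := hα (n + 1) (by omega)
      have hαn := hα n hn
      set a := s * (1 - A) with ha
      set c := s * A with hc
      have heq : ∀ ω, Real.exp (s * V (n + 1) ω) =
          Real.exp (a * V n ω) * Real.exp (c * W n ω) := by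
        intro ω
        rw [hVrec n hn, ← Real.exp_add]
        congr 1
        ring
      simp_rw [heq]
      have hiexp : IndepFun (fun ω => Real.exp (a * V n ω))
          (fun ω => Real.exp (c * W n ω)) μ :=
        (hindep n hn).comp (Real.measurable_exp.comp (measurable_const_mul a))
          (Real.measurable_exp.comp (measurable_const_mul c))
      have hm1 : AEStronglyMeasurable (fun ω => Real.exp (a * V n ω)) μ :=
        (Real.measurable_exp.comp ((hVmeas n hn).const_mul a)).aestronglyMeasurable
      have hm2 : AEStronglyMeasurable (fun ω => Real.exp (c * W n ω)) μ :=
        (Real.measurable_exp.comp ((hWmeas n).const_mul c)).aestronglyMeasurable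
      rw [hiexp.integral_fun_mul_eq_mul_integral hm1 hm2]
      have hIH := ih hn s  -- wrong: need ih at a
      have h1' : ∫ ω, Real.exp (a * V n ω) ∂μ ≤ Real.exp (a ^ 2 * α n * b ^ 2 / 8) :=
        ih hn a
      have h2' : ∫ ω, Real.exp (c * W n ω) ∂μ ≤ Real.exp (c ^ 2 * b ^ 2 / 8) :=
        hWmgf n c
      have hnn1 : (0:ℝ) ≤ ∫ ω, Real.exp (a * V n ω) ∂μ :=
        integral_nonneg fun ω => (Real.exp_pos _).le
      have hnn2 : (0:ℝ) ≤ ∫ ω, Real.exp (c * W n ω) ∂μ :=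
        integral_nonneg fun ω => (Real.exp_pos _).le
      calc (∫ ω, Real.exp (a * V n ω) ∂μ) * ∫ ω, Real.exp (c * W n ω) ∂μ
          ≤ Real.exp (a ^ 2 * α n * b ^ 2 / 8) * Real.exp (c ^ 2 * b ^ 2 / 8) :=
            mul_le_mul h1' h2' hnn2 (Real.exp_pos _).le
        _ ≤ Real.exp (s ^ 2 * α (n + 1) * b ^ 2 / 8) := by
            rw [← Real.exp_add, Real.exp_le_exp]
            have key : (1 - A) ^ 2 * α n + A ^ 2 ≤ A := by
              nlinarith [hαcond n hn, hAn.1, hAn.2, hαn.1, hαn.2]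
            have hsb : (0:ℝ) ≤ s ^ 2 * b ^ 2 := mul_nonneg (sq_nonneg s) (sq_nonneg b)
            rw [ha, hc, ← hA]
            nlinarith [mul_le_mul_of_nonneg_left key hsb]
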